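/- Let Q = Q(C) be a covering polyhedron with vertex set {β_1,...,β_r} and let SC(Q) = {x ∈ ℝ^{s+1} : x ≥ 0, ⟨x, (c_i, -1)⟩ ≥ 0 for all columns c_i of C} be its Simis cone. Then SC(Q) equals the cone generated by {e_1,...,e_s, (β_1,1),...,(β_r,1)}, where e_1,...,e_s are unit vectors of ℝ^{s+1}. -/

import Mathlib

noncomputable section

/-- The covering polyhedron `Q(C) ⊆ ℝ^s` of the matrix `C`. -/
def CPset {s m : ℕ} (C : Matrix (Fin s) (Fin m) ℚ) : Set (Fin s → ℝ) :=
  {x | (∀ i, 0 ≤ x i) ∧ ∀ j, (1 : ℝ) ≤ ∑ i, x i * (C i j : ℝ)}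

/-- The Simis cone `SC(Q) = {x ∈ ℝ^{s+1} : x ≥ 0, ⟨x,(c_i,-1)⟩ ≥ 0 ∀ i}`, with
`ℝ^{s+1}` encoded as `(Fin s → ℝ) × ℝ`. -/
def SCset {s m : ℕ} (C : Matrix (Fin s) (Fin m) ℚ) : Set ((Fin s → ℝ) × ℝ) :=
  {x | (∀ i, 0 ≤ x.1 i) ∧ 0 ≤ x.2 ∧ ∀ j, x.2 ≤ ∑ i, x.1 i * (C i j : ℝ)}

open Classical

section AuxLemmas

variable {s m r : ℕ}

def dotC (C : Matrix (Fin s) (Fin m) ℚ) (y : Fin s → ℝ) (j : Fin m) : ℝ :=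
  ∑ i, y i * (C i j : ℝ)

lemma mem_CPset_iff (C : Matrix (Fin s) (Fin m) ℚ) (y : Fin s → ℝ) :
    y ∈ CPset C ↔ (∀ i, 0 ≤ y i) ∧ ∀ j, (1:ℝ) ≤ dotC C y j := Iff.rfl

lemma dotC_add (C : Matrix (Fin s) (Fin m) ℚ) (x y : Fin s → ℝ) (j : Fin m) :
    dotC C (x + y) j = dotC C x j + dotC C y j := by
  simp [dotC, add_mul, Finset.sum_add_distrib]

lemma dotC_smul (C : Matrix (Fin s) (Fin m) ℚ) (a : ℝ) (x : Fin s → ℝ) (j : Fin m) :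
    dotC C (a • x) j = a * dotC C x j := by
  simp [dotC, Finset.mul_sum, mul_assoc]

/-- measure: number of non-tight constraints -/
def tmu (C : Matrix (Fin s) (Fin m) ℚ) (y : Fin s → ℝ) : ℕ :=
  (Finset.univ.filter (fun i : Fin s => y i ≠ 0)).card +
  (Finset.univ.filter (fun j : Fin m => dotC C y j ≠ 1)).card

lemma step (C : Matrix (Fin s) (Fin m) ℚ) (y : Fin s → ℝ) (hy : y ∈ CPset C)
    (e : Fin s → ℝ)
    (h0 : ∀ i, y i = 0 → e i = 0)
    (h1 : ∀ j, dotC C y j = 1 → dotC C e j = 0)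
    (hA : (∃ i, e i < 0) ∨ (∃ j, dotC C e j < 0)) :
    ∃ t : ℝ, 0 < t ∧ (y + t • e) ∈ CPset C ∧ tmu C (y + t • e) < tmu C y := by
  obtain ⟨hy0, hy1⟩ := hy
  set S : Finset ℝ :=
    ((Finset.univ.filter (fun i : Fin s => e i < 0)).image (fun i => y i / (-(e i)))) ∪
    ((Finset.univ.filter (fun j : Fin m => dotC C e j < 0)).image
      (fun j => (dotC C y j - 1) / (-(dotC C e j)))) with hS
  have hSne : S.Nonempty := by
    rcases hA with ⟨i, hi⟩ | ⟨j, hj⟩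
    · exact ⟨y i / (-(e i)), Finset.mem_union_left _ (Finset.mem_image.2
        ⟨i, Finset.mem_filter.2 ⟨Finset.mem_univ i, hi⟩, rfl⟩)⟩
    · exact ⟨(dotC C y j - 1) / (-(dotC C e j)), Finset.mem_union_right _ (Finset.mem_image.2
        ⟨j, Finset.mem_filter.2 ⟨Finset.mem_univ j, hj⟩, rfl⟩)⟩
  set t := S.min' hSne with ht
  have hy1' : ∀ j, dotC C y j ≥ 1 := hy1
  -- all elements of S are positive
  have hpos : ∀ u ∈ S, 0 < u := by
    intro u hu
    rcases Finset.mem_union.1 hu with h | h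
    · obtain ⟨i, hi, rfl⟩ := Finset.mem_image.1 h
      have hi' : e i < 0 := (Finset.mem_filter.1 hi).2
      have : y i ≠ 0 := fun h => hi'.ne (h0 i h)
      have : 0 < y i := lt_of_le_of_ne (hy0 i) (Ne.symm this)
      exact div_pos this (by linarith)
    · obtain ⟨j, hj, rfl⟩ := Finset.mem_image.1 h
      have hj' : dotC C e j < 0 := (Finset.mem_filter.1 hj).2
      have : dotC C y j ≠ 1 := fun h => hj'.ne (h1 j h)
      have h2 : 1 < dotC C y j := lt_of_le_of_ne (hy1 j) (Ne.symm this)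
      have : 0 < dotC C y j - 1 := by linarith
      exact div_pos this (by linarith)
  have htpos : 0 < t := hpos t (S.min'_mem hSne)
  have hdot : ∀ j, dotC C (y + t • e) j = dotC C y j + t * dotC C e j := by
    intro j; rw [dotC_add, dotC_smul]
  -- membership
  have hmem0 : ∀ i, 0 ≤ (y + t • e) i := by
    intro i
    simp only [Pi.add_apply, Pi.smul_apply, smul_eq_mul]
    rcases le_or_gt 0 (e i) with h | h
    · nlinarith [hy0 i]
    · have hmem : y i / (-(e i)) ∈ S := Finset.mem_union_left _ (Finset.mem_image.2
        ⟨i, Finset.mem_filter.2 ⟨Finset.mem_univ i, h⟩, rfl⟩)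
      have hle : t ≤ y i / (-(e i)) := S.min'_le _ hmem
      have hne : (0:ℝ) < -(e i) := by linarith
      rw [le_div_iff₀ hne] at hle
      nlinarith
  have hmem1 : ∀ j, (1:ℝ) ≤ dotC C (y + t • e) j := by
    intro j
    rw [hdot]
    rcases le_or_gt 0 (dotC C e j) with h | h
    · nlinarith [hy1' j, htpos]
    · have hmem : (dotC C y j - 1) / (-(dotC C e j)) ∈ S := Finset.mem_union_right _
        (Finset.mem_image.2 ⟨j, Finset.mem_filter.2 ⟨Finset.mem_univ j, h⟩, rfl⟩)
      have hle : t ≤ _ := S.min'_le _ hmem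
      have hne : (0:ℝ) < -(dotC C e j) := by linarith
      rw [le_div_iff₀ hne] at hle
      nlinarith
  refine ⟨t, htpos, ⟨hmem0, fun j => by simpa [dotC] using hmem1 j⟩, ?_⟩
  -- the measure decreases
  have hsub1 : (Finset.univ.filter (fun i : Fin s => (y + t • e) i ≠ 0)) ⊆
      (Finset.univ.filter (fun i : Fin s => y i ≠ 0)) := by
    intro i hi
    simp only [Finset.mem_filter, Finset.mem_univ, true_and] at hi ⊢
    intro h
    exact hi (by simp [h, h0 i h])
  have hsub2 : (Finset.univ.filter (fun j : Fin m => dotC C (y + t • e) j ≠ 1)) ⊆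
      (Finset.univ.filter (fun j : Fin m => dotC C y j ≠ 1)) := by
    intro j hj
    simp only [Finset.mem_filter, Finset.mem_univ, true_and] at hj ⊢
    intro h
    exact hj (by rw [hdot, h, h1 j h]; ring)
  -- t is attained, giving a new tight constraint
  have hattain := S.min'_mem hSne
  rw [← ht] at hattain
  rcases Finset.mem_union.1 hattain with h | h
  · obtain ⟨i, hi, hti⟩ := Finset.mem_image.1 h
    have hi' : e i < 0 := (Finset.mem_filter.1 hi).2
    have hyi : y i ≠ 0 := fun h => hi'.ne (h0 i h)
    have hnewtight : (y + t • e) i = 0 := by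
      simp only [Pi.add_apply, Pi.smul_apply, smul_eq_mul]
      rw [← hti]
      field_simp [hi'.ne]
      ring
    have h1lt : (Finset.univ.filter (fun i : Fin s => (y + t • e) i ≠ 0)).card <
        (Finset.univ.filter (fun i : Fin s => y i ≠ 0)).card := by
      apply Finset.card_lt_card
      refine ⟨hsub1, fun hss => ?_⟩
      have := hss (Finset.mem_filter.2 ⟨Finset.mem_univ i, hyi⟩)
      simp only [Finset.mem_filter] at this
      exact this.2 hnewtight
    have h2le := Finset.card_le_card hsub2
    unfold tmu; omega
  · obtain ⟨j, hj, htj⟩ := Finset.mem_image.1 h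
    have hj' : dotC C e j < 0 := (Finset.mem_filter.1 hj).2
    have hyj : dotC C y j ≠ 1 := fun h => hj'.ne (h1 j h)
    have hnewtight : dotC C (y + t • e) j = 1 := by
      rw [hdot, ← htj]
      field_simp [hj'.ne]
      ring
    have h2lt : (Finset.univ.filter (fun j : Fin m => dotC C (y + t • e) j ≠ 1)).card <
        (Finset.univ.filter (fun j : Fin m => dotC C y j ≠ 1)).card := by
      apply Finset.card_lt_card
      refine ⟨hsub2, fun hss => ?_⟩
      have := hss (Finset.mem_filter.2 ⟨Finset.mem_univ j, hyj⟩)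
      simp only [Finset.mem_filter] at this
      exact this.2 hnewtight
    have h1le := Finset.card_le_card hsub1
    unfold tmu; omega

lemma dotC_sub (C : Matrix (Fin s) (Fin m) ℚ) (x y : Fin s → ℝ) (j : Fin m) :
    dotC C (x - y) j = dotC C x j - dotC C y j := by
  simp [dotC, sub_mul, Finset.sum_sub_distrib]

lemma dotC_neg (C : Matrix (Fin s) (Fin m) ℚ) (x : Fin s → ℝ) (j : Fin m) :
    dotC C (-x) j = - dotC C x j := by
  simp [dotC, Finset.sum_neg_distrib]

lemma dotC_sum (C : Matrix (Fin s) (Fin m) ℚ) {r : ℕ} (f : Fin r → Fin s → ℝ) (j : Fin m) :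
    dotC C (∑ k, f k) j = ∑ k, dotC C (f k) j := by
  simp only [dotC, Finset.sum_apply, Finset.sum_mul]
  exact Finset.sum_comm

/-- if only the zero direction is compatible with the tight constraints, `y` is extreme -/
lemma extreme_of_rigid (C : Matrix (Fin s) (Fin m) ℚ) (y : Fin s → ℝ) (hy : y ∈ CPset C)
    (hV : ∀ d : Fin s → ℝ, (∀ i, y i = 0 → d i = 0) →
      (∀ j, dotC C y j = 1 → dotC C d j = 0) → d = 0) :
    y ∈ Set.extremePoints ℝ (CPset C) := by
  refine ⟨hy, fun x₁ hx₁ x₂ hx₂ hseg => ?_⟩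
  obtain ⟨a, b, ha, hb, hab, habx⟩ := hseg
  have key : ∀ a b : ℝ, 0 < a → 0 < b → a + b = 1 → ∀ z₁ ∈ CPset C, ∀ z₂ ∈ CPset C,
      a • z₁ + b • z₂ = y → z₁ = y := by
    intro a b ha hb hab' z₁ hz₁ z₂ hz₂ hz
    have hd : z₁ - y = 0 := by
      apply hV
      · intro i hi
        have h1 : a * z₁ i + b * z₂ i = 0 := by
          have := congrFun hz i
          simpa [hi] using this
        have e1 : z₁ i = 0 := by nlinarith [hz₁.1 i, hz₂.1 i]
        simp [e1, hi]
      · intro j hj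
        have hlin : a * dotC C z₁ j + b * dotC C z₂ j = 1 := by
          have := congrArg (fun w => dotC C w j) hz
          simpa [dotC_add, dotC_smul, hj] using this
        have hz₁j : (1:ℝ) ≤ dotC C z₁ j := hz₁.2 j
        have hz₂j : (1:ℝ) ≤ dotC C z₂ j := hz₂.2 j
        have e1 : dotC C z₁ j = 1 := by nlinarith
        rw [dotC_sub, e1, hj, sub_self]
    have := sub_eq_zero.1 hd
    exact this
  have h1 : x₁ = y := key a b ha hb hab x₁ hx₁ x₂ hx₂ habx
  have h2 : x₂ = y := key b a hb ha (by linarith) x₂ hx₂ x₁ hx₁ (by rw [add_comm]; exact habx)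
  exact h1

/-- decomposition predicate -/
def Dcmp (β : Fin r → Fin s → ℝ) (y : Fin s → ℝ) : Prop :=
  ∃ (c : Fin s → ℝ) (t : Fin r → ℝ),
    (∀ i, 0 ≤ c i) ∧ (∀ j, 0 ≤ t j) ∧ (∑ j, t j = 1) ∧ y = c + ∑ j, t j • β j

lemma decomp (C : Matrix (Fin s) (Fin m) ℚ) (β : Fin r → Fin s → ℝ)
    (hvert : Set.extremePoints ℝ (CPset C) = Set.range β) :
    ∀ y ∈ CPset C, Dcmp β y := by
  suffices H : ∀ n, ∀ y ∈ CPset C, tmu C y ≤ n → Dcmp β y by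
    intro y hy; exact H (tmu C y) y hy le_rfl
  intro n
  induction n using Nat.strong_induction_on with
  | _ n ih =>
  intro y hy hn
  by_cases hV : ∀ d : Fin s → ℝ, (∀ i, y i = 0 → d i = 0) →
      (∀ j, dotC C y j = 1 → dotC C d j = 0) → d = 0
  · -- y is an extreme point, hence some β k
    have hext := extreme_of_rigid C y hy hV
    rw [hvert] at hext
    obtain ⟨k, hk⟩ := hext
    refine ⟨0, fun j => if j = k then 1 else 0, fun i => le_rfl, ?_, ?_, ?_⟩
    · intro j; by_cases h : j = k <;> simp [h]
    · simp
    · simp only [zero_add]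
      rw [← hk]
      rw [Finset.sum_eq_single k]
      · simp
      · intro j _ hj; simp [hj]
      · simp
  · push_neg at hV
    obtain ⟨d, hd0, hd1, hdne⟩ := hV
    have hd0' : ∀ i, y i = 0 → (-d) i = 0 := fun i hi => by simp [hd0 i hi]
    have hd1' : ∀ j, dotC C y j = 1 → dotC C (-d) j = 0 := fun j hj => by
      rw [dotC_neg, hd1 j hj, neg_zero]
    by_cases hAd : (∃ i, d i < 0) ∨ (∃ j, dotC C d j < 0)
    · by_cases hAd' : (∃ i, (-d) i < 0) ∨ (∃ j, dotC C (-d) j < 0)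
      · -- both directions exit: convex combination
        obtain ⟨t₁, ht₁, hy₁, hμ₁⟩ := step C y hy d hd0 hd1 hAd
        obtain ⟨t₂, ht₂, hy₂, hμ₂⟩ := step C y hy (-d) hd0' hd1' hAd'
        obtain ⟨c₁, w₁, hc₁, hw₁, hs₁, he₁⟩ :=
          ih (tmu C (y + t₁ • d)) (lt_of_lt_of_le hμ₁ hn) _ hy₁ le_rfl
        obtain ⟨c₂, w₂, hc₂, hw₂, hs₂, he₂⟩ :=
          ih (tmu C (y + t₂ • (-d))) (lt_of_lt_of_le hμ₂ hn) _ hy₂ le_rfl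
        set lam := t₂ / (t₁ + t₂) with hlam
        have hsum : t₁ + t₂ > 0 := by linarith
        have hlam0 : 0 ≤ lam := by positivity
        have hlam1 : lam ≤ 1 := by rw [hlam, div_le_one hsum]; linarith
        have hcomb : y = lam • (y + t₁ • d) + (1 - lam) • (y + t₂ • (-d)) := by
          funext i
          simp only [Pi.add_apply, Pi.smul_apply, Pi.neg_apply, smul_eq_mul]
          have h5 : lam * t₁ - (1 - lam) * t₂ = 0 := by
            rw [hlam]; field_simp; ring
          linear_combination (-(d i)) * h5
        refine ⟨lam • c₁ + (1 - lam) • c₂, fun j => lam * w₁ j + (1 - lam) * w₂ j,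
          ?_, ?_, ?_, ?_⟩
        · intro i
          have := hc₁ i; have := hc₂ i
          simp only [Pi.add_apply, Pi.smul_apply, smul_eq_mul]
          nlinarith
        · intro j
          have := hw₁ j; have := hw₂ j
          show 0 ≤ lam * w₁ j + (1 - lam) * w₂ j
          nlinarith
        · rw [Finset.sum_add_distrib, ← Finset.mul_sum, ← Finset.mul_sum, hs₁, hs₂]; ring
        · rw [hcomb, he₁, he₂]
          simp only [smul_add, Finset.smul_sum, smul_smul, add_smul]
          rw [Finset.sum_add_distrib]
          abel
      · -- -d is a recession direction
        obtain ⟨t₁, ht₁, hy₁, hμ₁⟩ := step C y hy d hd0 hd1 hAd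
        obtain ⟨c₁, w₁, hc₁, hw₁, hs₁, he₁⟩ :=
          ih (tmu C (y + t₁ • d)) (lt_of_lt_of_le hμ₁ hn) _ hy₁ le_rfl
        push_neg at hAd'
        refine ⟨c₁ + t₁ • (-d), w₁, ?_, hw₁, hs₁, ?_⟩
        · intro i
          have h1 := hAd'.1 i
          simp only [Pi.neg_apply, not_lt, neg_nonneg] at h1 ⊢
          have := hc₁ i
          simp only [Pi.add_apply, Pi.smul_apply, Pi.neg_apply, smul_eq_mul]
          nlinarith [h1]
        · have : y = (y + t₁ • d) + t₁ • (-d) := by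
            funext i; simp only [Pi.add_apply, Pi.smul_apply, Pi.neg_apply, smul_eq_mul]; ring
          rw [this, he₁]
          abel
    · by_cases hAd' : (∃ i, (-d) i < 0) ∨ (∃ j, dotC C (-d) j < 0)
      · -- d is a recession direction
        obtain ⟨t₂, ht₂, hy₂, hμ₂⟩ := step C y hy (-d) hd0' hd1' hAd'
        obtain ⟨c₂, w₂, hc₂, hw₂, hs₂, he₂⟩ :=
          ih (tmu C (y + t₂ • (-d))) (lt_of_lt_of_le hμ₂ hn) _ hy₂ le_rfl
        push_neg at hAd
        refine ⟨c₂ + t₂ • d, w₂, ?_, hw₂, hs₂, ?_⟩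
        · intro i
          have h1 := hAd.1 i
          have := hc₂ i
          simp only [Pi.add_apply, Pi.smul_apply, smul_eq_mul]
          nlinarith [h1]
        · have : y = (y + t₂ • (-d)) + t₂ • d := by
            funext i; simp only [Pi.add_apply, Pi.smul_apply, Pi.neg_apply, smul_eq_mul]; ring
          rw [this, he₂]
          abel
      · -- neither exits ⇒ d = 0, contradiction
        push_neg at hAd hAd'
        exfalso
        apply hdne
        funext i
        have h1 := hAd.1 i
        have h2 := hAd'.1 i
        simp only [not_lt, Pi.neg_apply, neg_nonneg] at h1 h2
        simp only [Pi.zero_apply]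
        linarith

end AuxLemmas

/-- If `β_1,...,β_r` are the vertices of `Q(C)`, then the Simis cone equals the cone
generated by `e_1,...,e_s,(β_1,1),...,(β_r,1)`. -/
theorem stmt10 {s m r : ℕ} (C : Matrix (Fin s) (Fin m) ℚ)
    (hC : ∀ i j, 0 ≤ C i j) (hcol : ∀ j, ∃ i, C i j ≠ 0)
    (β : Fin r → Fin s → ℝ)
    (hvert : Set.extremePoints ℝ (CPset C) = Set.range β) :
    SCset C = {x | ∃ (c : Fin s → ℝ) (d : Fin r → ℝ),
      (∀ i, 0 ≤ c i) ∧ (∀ j, 0 ≤ d j) ∧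
      x.1 = c + ∑ j, d j • β j ∧ x.2 = ∑ j, d j} := by
  have hβ : ∀ k, β k ∈ CPset C := fun k =>
    extremePoints_subset (hvert ▸ Set.mem_range_self k)
  ext x
  constructor
  · rintro ⟨hx0, hx2, hxj⟩
    have hxj' : ∀ j, x.2 ≤ dotC C x.1 j := hxj
    rcases eq_or_lt_of_le hx2 with h | h
    · refine ⟨x.1, 0, hx0, fun j => le_rfl, ?_, ?_⟩
      · simp
      · simp [← h]
    · set y := x.2⁻¹ • x.1 with hy
      have hyQ : y ∈ CPset C := by
        constructor
        · intro i
          simp only [hy, Pi.smul_apply, smul_eq_mul]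
          exact mul_nonneg (inv_nonneg.2 hx2) (hx0 i)
        · intro j
          have : dotC C y j = x.2⁻¹ * dotC C x.1 j := dotC_smul C _ _ j
          show (1:ℝ) ≤ dotC C y j
          rw [this]
          have h2' : x.2 ≠ 0 := ne_of_gt h
          calc (1:ℝ) = x.2⁻¹ * x.2 := by field_simp
            _ ≤ x.2⁻¹ * dotC C x.1 j :=
              mul_le_mul_of_nonneg_left (hxj' j) (inv_nonneg.2 hx2)
      obtain ⟨c', w, hc, hw, hs, he⟩ := decomp C β hvert y hyQ
      refine ⟨x.2 • c', fun j => x.2 * w j, ?_, ?_, ?_, ?_⟩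
      · intro i
        simp only [Pi.smul_apply, smul_eq_mul]
        exact mul_nonneg hx2 (hc i)
      · intro j; exact mul_nonneg hx2 (hw j)
      · have hx1 : x.1 = x.2 • y := by
          rw [hy, smul_smul, mul_inv_cancel₀ (ne_of_gt h), one_smul]
        rw [hx1, he, smul_add, Finset.smul_sum]
        congr 1
        apply Finset.sum_congr rfl
        intro j _
        rw [smul_smul]
      · rw [← Finset.mul_sum, hs, mul_one]
  · rintro ⟨c, d, hc, hd, h1, h2⟩
    have hsumapp : ∀ i, (∑ j, d j • β j) i = ∑ j, d j * β j i := by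
      intro i; rw [Finset.sum_apply]; rfl
    refine ⟨?_, ?_, ?_⟩
    · intro i
      rw [h1]
      simp only [Pi.add_apply]
      rw [hsumapp]
      have : 0 ≤ ∑ j, d j * β j i :=
        Finset.sum_nonneg fun j _ => mul_nonneg (hd j) ((hβ j).1 i)
      linarith [hc i]
    · rw [h2]; exact Finset.sum_nonneg fun j _ => hd j
    · intro k
      show x.2 ≤ dotC C x.1 k
      rw [h1, h2, dotC_add, dotC_sum]
      have hck : 0 ≤ dotC C c k :=
        Finset.sum_nonneg fun i _ => mul_nonneg (hc i) (by exact_mod_cast hC i k)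
      have hterm : ∀ j, d j ≤ dotC C (d j • β j) k := by
        intro j
        rw [dotC_smul]
        have h3 : (1:ℝ) ≤ dotC C (β j) k := (hβ j).2 k
        nlinarith [hd j, h3]
      calc ∑ j, d j ≤ ∑ j, dotC C (d j • β j) k := Finset.sum_le_sum fun j _ => hterm j
        _ ≤ dotC C c k + ∑ j, dotC C (d j • β j) k := by linarith
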